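/- arXiv:1108.5927 — 3 statements merged into one kernel-verified Lean document; each statement's English description precedes it below -/
import Mathlib

section
/- (Kunugui–Novikov) Let P be a Polish space with a countable base {Vₙ}ₙ∈ℕ for its topology, and let T be a standard Borel space. Let B ⊆ P × T be a Borel set such that for every t ∈ T the section {p ∈ P : (p,t) ∈ B} is open in P. Then there exists a sequence {Bₙ}ₙ∈ℕ of Borel subsets of T such that B = ⋃ₙ (Vₙ × Bₙ). -/
open MeasureTheory Set Function PiNat TopologicalSpace

namespace KunuguiNovikovAux

variable {α : Type*}

/-- A sequence of sets is *measurably separated* if there are measurable supersets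
with empty intersection. -/
def Sep [MeasurableSpace α] (S : ℕ → Set α) : Prop :=
  ∃ W : ℕ → Set α, (∀ n, MeasurableSet (W n)) ∧ (∀ n, S n ⊆ W n) ∧ ⋂ n, W n = ∅

lemma sep_of_forall_update [MeasurableSpace α] {S : ℕ → Set α} (m : ℕ) (G : ℕ → Set α)
    (hS : S m ⊆ ⋃ k, G k) (h : ∀ k, Sep (update S m (G k))) : Sep S := by
  choose W hWm hWs hWe using h
  refine ⟨fun n => if n = m then ⋃ k, W k m else ⋂ k, W k n, fun n => ?_, fun n => ?_, ?_⟩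
  · rcases eq_or_ne n m with rfl | hn
    · simpa only [if_pos rfl, ite_true] using MeasurableSet.iUnion fun k => hWm k n
    · simpa only [if_neg hn] using MeasurableSet.iInter fun k => hWm k n
  · dsimp only
    rcases eq_or_ne n m with rfl | hn
    · rw [if_pos rfl]
      refine hS.trans (iUnion_mono fun k => ?_)
      simpa [update_self] using hWs k n
    · rw [if_neg hn]
      refine subset_iInter fun k => ?_
      simpa [update_of_ne hn] using hWs k n
  · ext x
    simp only [mem_iInter, mem_empty_iff_false, iff_false]
    intro hx
    have hxm := hx m
    rw [if_pos rfl] at hxm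
    obtain ⟨k, hk⟩ := mem_iUnion.1 hxm
    have hmem : x ∈ ⋂ n, W k n := by
      refine mem_iInter.2 fun n => ?_
      rcases eq_or_ne n m with rfl | hn
      · exact hk
      · have h2 := hx n
        rw [if_neg hn] at h2
        exact mem_iInter.1 h2 k
    rw [hWe k] at hmem
    exact hmem


/-- One-step refinement: if a family of images of cylinders is not separated, we can extend
the cylinder at index `m` keeping the family non-separated. -/
private lemma refine_step [TopologicalSpace α] [MeasurableSpace α]
    (f : ℕ → (ℕ → ℕ) → α) (x : ℕ → ℕ → ℕ) (L : ℕ → ℕ) (m : ℕ)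
    (h : ¬ Sep (fun n => f n '' cylinder (x n) (L n))) :
    ∃ z : ℕ → ℕ, z ∈ cylinder (x m) (L m) ∧
      ¬ Sep (fun n => f n '' cylinder (update x m z n) (update L m (L m + 1) n)) := by
  contrapose! h
  apply sep_of_forall_update m (fun k => f m '' cylinder (update (x m) (L m) k) (L m + 1))
  · rw [← image_iUnion, ← iUnion_cylinder_update (x m) (L m)]
  · intro k
    have h1 := h (update (x m) (L m) k) (update_mem_cylinder _ _ _)
    convert h1 using 1
    funext n
    rcases eq_or_ne n m with rfl | hn
    · simp
    · simp [update_of_ne hn]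

/-- **Novikov's separation theorem**, range version: if countably many ranges of continuous
functions from the Baire space have empty intersection, they admit Borel supersets with empty
intersection. -/
theorem sep_ranges [TopologicalSpace α] [T2Space α] [MeasurableSpace α] [OpensMeasurableSpace α]
    (f : ℕ → (ℕ → ℕ) → α) (hf : ∀ n, Continuous (f n))
    (hdisj : ⋂ n, range (f n) = ∅) : Sep (fun n => range (f n)) := by
  by_contra hsep
  have step : ∀ (m : ℕ)
      (q : {q : (ℕ → ℕ → ℕ) × (ℕ → ℕ) // ¬ Sep (fun n => f n '' cylinder (q.1 n) (q.2 n))}),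
      ∃ q' : {q : (ℕ → ℕ → ℕ) × (ℕ → ℕ) // ¬ Sep (fun n => f n '' cylinder (q.1 n) (q.2 n))},
      q'.1.2 = update q.1.2 m (q.1.2 m + 1) ∧
      q'.1.1 m ∈ cylinder (q.1.1 m) (q.1.2 m) ∧ ∀ n, n ≠ m → q'.1.1 n = q.1.1 n := by
    rintro m ⟨⟨x, L⟩, hq⟩
    obtain ⟨z, hz, h'⟩ := refine_step f x L m hq
    refine ⟨⟨(update x m z, update L m (L m + 1)), h'⟩, rfl, ?_, fun n hn => update_of_ne hn _ _⟩
    simpa using hz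
  choose F hFL hFx hFx' using step
  have q0Q : ¬ Sep (fun n =>
      f n '' cylinder ((fun (_ : ℕ) (_ : ℕ) => 0) n) ((fun (_ : ℕ) => 0) n)) := by
    simpa [cylinder_zero, image_univ] using hsep
  set e : ℕ → ℕ := fun j => (Nat.unpair j).1 with he
  set p : ℕ → {q : (ℕ → ℕ → ℕ) × (ℕ → ℕ) // ¬ Sep (fun n => f n '' cylinder (q.1 n) (q.2 n))} :=
    fun j => Nat.rec ⟨((fun _ _ => 0 : ℕ → ℕ → ℕ), (fun _ => 0 : ℕ → ℕ)), q0Q⟩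
      (fun j q => F (e j) q) j with hp
  have prec : ∀ j, p (j + 1) = F (e j) (p j) := fun j => rfl
  set X : ℕ → ℕ → ℕ → ℕ := fun j => (p j).1.1 with hX
  set L : ℕ → ℕ → ℕ := fun j => (p j).1.2 with hL
  have LS : ∀ j, L (j + 1) = update (L j) (e j) (L j (e j) + 1) := by
    intro j
    have h2 := hFL (e j) (p j)
    rw [← prec j] at h2
    exact h2
  have Lmono : ∀ n, Monotone fun j => L j n := by
    intro n
    apply monotone_nat_of_le_succ
    intro j
    rw [LS j]
    rcases eq_or_ne n (e j) with rfl | hn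
    · rw [update_self]; exact Nat.le_succ _
    · rw [update_of_ne hn]
  have Lstep : ∀ j, L (j + 1) (e j) = L j (e j) + 1 := by
    intro j; rw [LS j, update_self]
  have Lgrow : ∀ n k, k + 1 ≤ L (Nat.pair n k + 1) n := by
    intro n k
    induction k with
    | zero =>
      have h1 : e (Nat.pair n 0) = n := by simp [he]
      have := Lstep (Nat.pair n 0)
      rw [h1] at this
      omega
    | succ k ih =>
      have h1 : Nat.pair n k + 1 ≤ Nat.pair n (k + 1) :=
        Nat.pair_lt_pair_right n (Nat.lt_succ_self k)
      have h2 : L (Nat.pair n k + 1) n ≤ L (Nat.pair n (k + 1)) n := Lmono n h1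
      have h3 : e (Nat.pair n (k + 1)) = n := by simp [he]
      have h4 := Lstep (Nat.pair n (k + 1))
      rw [h3] at h4
      omega
  have Xstab : ∀ n i j j', j ≤ j' → i < L j n → X j' n i = X j n i := by
    intro n i j j' hjj' hi
    induction j', hjj' using Nat.le_induction with
    | base => rfl
    | succ j' hj ih =>
      rw [← ih]
      have hiL : i < L j' n := lt_of_lt_of_le hi (Lmono n hj)
      rcases eq_or_ne n (e j') with rfl | hn
      · have hmem := hFx (e j') (p j')
        rw [← prec j'] at hmem
        exact mem_cylinder_iff.1 hmem i hiL
      · have h2 := hFx' (e j') (p j') n hn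
        rw [← prec j'] at h2
        exact congrFun h2 i
  set y : ℕ → ℕ → ℕ := fun n i => X (Nat.pair n i + 1) n i with hy
  have ycyl : ∀ j n, cylinder (y n) (L j n) = cylinder (X j n) (L j n) := by
    intro j n
    apply mem_cylinder_iff_eq.1
    intro i hi
    have hig : i < L (Nat.pair n i + 1) n := Lgrow n i
    rcases le_total j (Nat.pair n i + 1) with hj | hj
    · exact Xstab n i j (Nat.pair n i + 1) hj hi
    · exact (Xstab n i (Nat.pair n i + 1) j hj hig).symm
  have M : ∀ j, ¬ Sep (fun n => f n '' cylinder (y n) (L j n)) := by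
    intro j hS
    apply (p j).2
    have hfn : (fun n => f n '' cylinder ((p j).1.1 n) ((p j).1.2 n)) =
        fun n => f n '' cylinder (y n) (L j n) := by
      funext n
      rw [show (p j).1.1 n = X j n from rfl, show (p j).1.2 n = L j n from rfl, ycyl j n]
    rw [hfn]
    exact hS
  -- the limit points cannot all coincide
  obtain ⟨a, ha⟩ : ∃ a, f a (y a) ≠ f 0 (y 0) := by
    by_contra hcon
    push_neg at hcon
    have : f 0 (y 0) ∈ ⋂ n, range (f n) := mem_iInter.2 fun n => ⟨y n, hcon n⟩
    rw [hdisj] at this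
    exact this
  have ha0 : a ≠ 0 := by rintro rfl; exact ha rfl
  obtain ⟨u, v, u_open, v_open, hu, hv, huv⟩ := t2_separation (Ne.symm ha)
  letI : MetricSpace (ℕ → ℕ) := metricSpaceNatNat
  obtain ⟨ε0, ε0pos, hε0⟩ : ∃ ε0 > 0, Metric.ball (y 0) ε0 ⊆ f 0 ⁻¹' u :=
    Metric.mem_nhds_iff.1 ((hf 0).continuousAt.preimage_mem_nhds (u_open.mem_nhds hu))
  obtain ⟨εa, εapos, hεa⟩ : ∃ εa > 0, Metric.ball (y a) εa ⊆ f a ⁻¹' v :=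
    Metric.mem_nhds_iff.1 ((hf a).continuousAt.preimage_mem_nhds (v_open.mem_nhds hv))
  obtain ⟨N, hN⟩ : ∃ N : ℕ, (1 / 2 : ℝ) ^ N < min ε0 εa :=
    exists_pow_lt_of_lt_one (lt_min ε0pos εapos) (by norm_num)
  set j := max (Nat.pair 0 N + 1) (Nat.pair a N + 1) with hj
  have hL0 : N ≤ L j 0 := by
    have h1 := Lgrow 0 N
    have h2 : L (Nat.pair 0 N + 1) 0 ≤ L j 0 := Lmono 0 (le_max_left (Nat.pair 0 N + 1) (Nat.pair a N + 1))
    omega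
  have hLa : N ≤ L j a := by
    have h1 := Lgrow a N
    have h2 : L (Nat.pair a N + 1) a ≤ L j a := Lmono a (le_max_right (Nat.pair 0 N + 1) (Nat.pair a N + 1))
    omega
  have key : ∀ (b : ℕ) (w : Set α), IsOpen w → Metric.ball (y b) (min ε0 εa) ⊆ f b ⁻¹' w →
      N ≤ L j b → f b '' cylinder (y b) (L j b) ⊆ w := by
    intro b w _ hball hNb
    rw [image_subset_iff]
    intro z hz
    apply hball
    rw [Metric.mem_ball]
    calc dist z (y b) ≤ (1 / 2 : ℝ) ^ (L j b) := mem_cylinder_iff_dist_le.1 hz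
      _ ≤ (1 / 2 : ℝ) ^ N := by
          apply pow_le_pow_of_le_one (by norm_num) (by norm_num) hNb
      _ < min ε0 εa := hN
  have hsub0 : f 0 '' cylinder (y 0) (L j 0) ⊆ u := by
    apply key 0 u u_open _ hL0
    exact (Metric.ball_subset_ball (min_le_left _ _)).trans hε0
  have hsuba : f a '' cylinder (y a) (L j a) ⊆ v := by
    apply key a v v_open _ hLa
    exact (Metric.ball_subset_ball (min_le_right _ _)).trans hεa
  apply M j
  refine ⟨fun n => if n = 0 then u else if n = a then v else univ, fun n => ?_, fun n => ?_, ?_⟩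
  · dsimp only
    rcases eq_or_ne n 0 with rfl | hn0
    · rw [if_pos rfl]; exact u_open.measurableSet
    · rcases eq_or_ne n a with rfl | hna
      · rw [if_neg hn0, if_pos rfl]; exact v_open.measurableSet
      · rw [if_neg hn0, if_neg hna]; exact MeasurableSet.univ
  · dsimp only
    rcases eq_or_ne n 0 with rfl | hn0
    · rw [if_pos rfl]; exact hsub0
    · rcases eq_or_ne n a with rfl | hna
      · rw [if_neg hn0, if_pos rfl]
        exact hsuba
      · rw [if_neg hn0, if_neg hna]
        exact subset_univ _
  · rw [eq_empty_iff_forall_notMem]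
    intro z hz
    have h0 := mem_iInter.1 hz 0
    rw [if_pos rfl] at h0
    have haa := mem_iInter.1 hz a
    rw [if_neg ha0, if_pos rfl] at haa
    exact (disjoint_left.1 huv h0) haa

/-- **Novikov's separation theorem**: countably many analytic sets with empty intersection
admit Borel supersets with empty intersection. -/
theorem sep_analytic [TopologicalSpace α] [T2Space α] [MeasurableSpace α] [OpensMeasurableSpace α]
    (A : ℕ → Set α) (hA : ∀ n, AnalyticSet (A n)) (h : ⋂ n, A n = ∅) : Sep A := by
  by_cases hne : ∃ n0, A n0 = ∅
  · obtain ⟨n0, hn0⟩ := hne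
    refine ⟨fun n => if n = n0 then ∅ else univ, fun n => by dsimp only; split <;> simp, fun n => ?_, ?_⟩
    · rcases eq_or_ne n n0 with rfl | hn
      · simp [hn0]
      · simp [hn]
    · rw [eq_empty_iff_forall_notMem]
      intro x hx
      have := mem_iInter.1 hx n0
      rwa [if_pos rfl] at this
  · push_neg at hne
    have hex : ∀ n, ∃ g : (ℕ → ℕ) → α, Continuous g ∧ range g = A n := by
      intro n
      have h1 := hA n
      rw [AnalyticSet] at h1
      rcases h1 with h0 | hg
      · exact absurd h0 (nonempty_iff_ne_empty.1 (hne n))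
      · exact hg
    choose g hgc hgr using hex
    have hS := sep_ranges g hgc (by simpa only [hgr] using h)
    simpa only [hgr] using hS

end KunuguiNovikovAux

/-- **Kunugui–Novikov theorem.** Let `P` be a Polish space with a countable base
`{V n}` of its topology and let `T` be a standard Borel space. If `B ⊆ P × T` is a
Borel set all of whose sections `{p | (p, t) ∈ B}` are open in `P`, then there is a
sequence `{B n}` of Borel subsets of `T` such that `B = ⋃ n, V n × B n`. -/
theorem kunugui_novikov
    {P : Type*} [TopologicalSpace P] [PolishSpace P] [MeasurableSpace P] [BorelSpace P]
    {T : Type*} [MeasurableSpace T] [StandardBorelSpace T]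
    (V : ℕ → Set P) (hV : TopologicalSpace.IsTopologicalBasis (Set.range V))
    (B : Set (P × T)) (hB : MeasurableSet B)
    (hsec : ∀ t : T, IsOpen {p : P | (p, t) ∈ B}) :
    ∃ Bn : ℕ → Set T, (∀ n, MeasurableSet (Bn n)) ∧
      B = ⋃ n, (V n) ×ˢ (Bn n) := by
  classical
  letI := upgradeStandardBorel T
  -- the "bad" analytic sets in `T`
  set C : ℕ → Set T := fun n => Prod.snd '' ((V n ×ˢ (Set.univ : Set T)) ∩ Bᶜ) with hC
  have hVopen : ∀ n, IsOpen (V n) := fun n => hV.isOpen (Set.mem_range_self n)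
  have hCa : ∀ n, MeasureTheory.AnalyticSet (C n) := by
    intro n
    have hmeas : MeasurableSet ((V n ×ˢ (Set.univ : Set T)) ∩ Bᶜ) :=
      (((hVopen n).measurableSet).prod MeasurableSet.univ).inter hB.compl
    exact hmeas.analyticSet.image_of_continuous continuous_snd
  -- the analytic family with empty intersection in `P × T`
  set A : ℕ → Set (P × T) := fun n =>
    Nat.casesOn n B (fun m => (((V m)ᶜ) ×ˢ (Set.univ : Set T)) ∪ (Prod.snd ⁻¹' C m)) with hA
  have hAa : ∀ n, MeasureTheory.AnalyticSet (A n) := by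
    intro n
    cases n with
    | zero => exact hB.analyticSet
    | succ m =>
      have h1 : MeasureTheory.AnalyticSet ((((V m)ᶜ) ×ˢ (Set.univ : Set T)) : Set (P × T)) :=
        ((hVopen m).isClosed_compl.prod isClosed_univ).analyticSet
      have h2 : MeasureTheory.AnalyticSet ((Prod.snd ⁻¹' C m) : Set (P × T)) :=
        (hCa m).preimage continuous_snd
      rw [hA]
      dsimp only
      rw [Set.union_eq_iUnion]
      exact MeasureTheory.AnalyticSet.iUnion (by rintro (_ | _) <;> simpa)
  have hAempty : ⋂ n, A n = ∅ := by
    rw [Set.eq_empty_iff_forall_notMem]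
    rintro ⟨p, t⟩ hpt
    have h0 : (p, t) ∈ B := Set.mem_iInter.1 hpt 0
    obtain ⟨w, ⟨n, rfl⟩, hpw, hw⟩ :=
      hV.exists_subset_of_mem_open (show p ∈ {q | (q, t) ∈ B} from h0) (hsec t)
    have h1 := Set.mem_iInter.1 hpt (n + 1)
    rcases h1 with h1 | h1
    · exact h1.1 hpw
    · obtain ⟨⟨q, t'⟩, ⟨⟨hq, -⟩, hqB⟩, ht'⟩ := h1
      dsimp only at ht'
      subst ht'
      exact hqB (hw hq)
  obtain ⟨W, hWm, hWs, hWe⟩ := KunuguiNovikovAux.sep_analytic A hAa hAempty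
  -- define `Bn` via the Lusin separation theorem
  have hdisj : ∀ n, Disjoint (Prod.snd '' (W (n + 1))ᶜ) (C n) := by
    intro n
    rw [Set.disjoint_left]
    rintro t ⟨⟨q, t'⟩, hq, ht'⟩ htC
    dsimp only at ht'
    subst ht'
    exact hq (hWs (n + 1) (Set.mem_union_right _ htC))
  have hsepn : ∀ n, ∃ Bn : Set T, Prod.snd '' (W (n + 1))ᶜ ⊆ Bn ∧ Disjoint (C n) Bn ∧
      MeasurableSet Bn := by
    intro n
    exact MeasureTheory.AnalyticSet.measurablySeparable
      (((hWm (n + 1)).compl.analyticSet).image_of_continuous continuous_snd) (hCa n) (hdisj n)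
  choose Bn hBn1 hBn2 hBn3 using hsepn
  refine ⟨Bn, hBn3, Set.Subset.antisymm ?_ ?_⟩
  · rintro ⟨p, t⟩ hpt
    have hnot : (p, t) ∉ ⋂ m, W m := by rw [hWe]; exact Set.notMem_empty _
    rw [Set.mem_iInter] at hnot
    push_neg at hnot
    obtain ⟨m, hm⟩ := hnot
    cases m with
    | zero => exact absurd (hWs 0 hpt) hm
    | succ n =>
      have hpn : p ∈ V n := by
        by_contra hp
        exact hm (hWs (n + 1) (Set.mem_union_left _ ⟨hp, Set.mem_univ t⟩))
      exact Set.mem_iUnion.2 ⟨n, hpn, hBn1 n ⟨(p, t), hm, rfl⟩⟩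
  · rintro ⟨p, t⟩ hpt
    obtain ⟨n, hpn, htn⟩ : ∃ n, p ∈ V n ∧ t ∈ Bn n := by
      obtain ⟨s, hs⟩ := Set.mem_iUnion.1 hpt
      exact ⟨s, hs.1, hs.2⟩
    by_contra hB'
    have htC : t ∈ C n := ⟨(p, t), ⟨⟨hpn, Set.mem_univ t⟩, hB'⟩, rfl⟩
    exact (Set.disjoint_left.1 (hBn2 n) htC) htn
end

section
/- (Takesaki selection theorem, Borel version) Let R be an equivalence relation on a Polish space X such that every equivalence class is a closed subset of X, and such that the R-saturation of every open subset of X is a Borel set. Then there exists a Borel subset of X meeting every equivalence class in exactly one point. -/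
open Metric TopologicalSpace

section TakesakiAux

variable {X : Type*} [MetricSpace X]

/-- The `R`-saturation of a set. -/
def tkSat (R : X → X → Prop) (A : Set X) : Set X := {x | ∃ u ∈ A, R u x}

/-- Radii for a countable family of balls. -/
noncomputable def tkr (n : ℕ) : ℝ := (1 / 2 : ℝ) ^ n.unpair.2

/-- A countable family of balls. -/
noncomputable def tkV (u : ℕ → X) (n : ℕ) : Set X := Metric.ball (u n.unpair.1) (tkr n)

lemma tkr_pos (n : ℕ) : 0 < tkr n := by unfold tkr; positivity

lemma tkV_isOpen (u : ℕ → X) (n : ℕ) : IsOpen (tkV u n) := Metric.isOpen_ball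

/-- Basis property: inside any open set around `y` there is a small ball from the family
containing `y`, with closure inside the open set. -/
lemma tk_basis {u : ℕ → X} (hu : DenseRange u) (y : X) (O : Set X) (hO : IsOpen O)
    (hy : y ∈ O) (m : ℕ) :
    ∃ n, y ∈ tkV u n ∧ closure (tkV u n) ⊆ O ∧ tkr n ≤ (1 / 2 : ℝ) ^ m := by
  obtain ⟨δ, hδ, hball⟩ := Metric.isOpen_iff.1 hO y hy
  obtain ⟨j0, hj0⟩ := exists_pow_lt_of_lt_one (by linarith : (0:ℝ) < δ / 2)
    (by norm_num : (1/2:ℝ) < 1)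
  set j := max j0 m with hj
  have hhalf : (0:ℝ) ≤ 1/2 := by norm_num
  have hhalf1 : (1:ℝ)/2 ≤ 1 := by norm_num
  have hρδ : (1/2:ℝ) ^ j < δ / 2 :=
    lt_of_le_of_lt (pow_le_pow_of_le_one hhalf hhalf1 (le_max_left _ _)) hj0
  have hρm : (1/2:ℝ) ^ j ≤ (1/2:ℝ) ^ m :=
    pow_le_pow_of_le_one hhalf hhalf1 (le_max_right _ _)
  have hρpos : (0:ℝ) < (1/2:ℝ) ^ j := by positivity
  obtain ⟨i, hi⟩ := hu.exists_dist_lt y hρpos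
  refine ⟨Nat.pair i j, ?_, ?_, ?_⟩
  · simp only [tkV, tkr, Nat.unpair_pair, Metric.mem_ball]
    simpa [dist_comm] using hi
  · simp only [tkV, tkr, Nat.unpair_pair]
    refine (closure_ball_subset_closedBall).trans ?_
    intro z hz
    apply hball
    simp only [Metric.mem_closedBall] at hz
    simp only [Metric.mem_ball]
    calc dist z y ≤ dist z (u i) + dist (u i) y := dist_triangle _ _ _
      _ ≤ (1/2:ℝ)^j + (1/2:ℝ)^j := by
          have := hi
          rw [dist_comm (u i) y]; exact add_le_add hz (le_of_lt (by simpa [dist_comm] using hi))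
      _ < δ := by linarith
  · simpa [tkr, Nat.unpair_pair] using hρm

/-- The recursive choice of ball indices along each class. -/
noncomputable def tkF (R : X → X → Prop) (u : ℕ → X) (x : X) : ℕ → ℕ
  | 0 => sInf {n | x ∈ tkSat R (tkV u n)}
  | k + 1 => sInf {n | closure (tkV u n) ⊆ tkV u (tkF R u x k) ∧
      tkr n ≤ (1/2 : ℝ) ^ (k + 1) ∧ x ∈ tkSat R (tkV u n)}

lemma tkSat_congr {R : X → X → Prop} (hR : Equivalence R) {x y : X} (h : R x y) (A : Set X) :
    x ∈ tkSat R A ↔ y ∈ tkSat R A := by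
  constructor
  · rintro ⟨v, hv, hvx⟩; exact ⟨v, hv, hR.trans hvx h⟩
  · rintro ⟨v, hv, hvy⟩; exact ⟨v, hv, hR.trans hvy (hR.symm h)⟩

lemma tkF_congr {R : X → X → Prop} (hR : Equivalence R) (u : ℕ → X) {x y : X} (h : R x y) :
    ∀ k, tkF R u x k = tkF R u y k := by
  intro k
  induction k with
  | zero =>
      simp only [tkF]
      congr 1
      ext n
      exact tkSat_congr hR h _
  | succ k ih =>
      simp only [tkF, ih]
      congr 1
      ext n
      simp only [Set.mem_setOf_eq]
      rw [tkSat_congr hR h (tkV u n)]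

section Spec

variable {R : X → X → Prop} {u : ℕ → X}

lemma tk_nonempty0 (hR : Equivalence R) (hu : DenseRange u) (x : X) :
    {n | x ∈ tkSat R (tkV u n)}.Nonempty := by
  obtain ⟨n, hn, -, -⟩ := tk_basis hu x Set.univ isOpen_univ (Set.mem_univ x) 0
  exact ⟨n, ⟨x, hn, hR.refl x⟩⟩

lemma tk_nonempty_succ (hR : Equivalence R) (hu : DenseRange u) (x : X) (k : ℕ)
    (hx : x ∈ tkSat R (tkV u (tkF R u x k))) :
    {n | closure (tkV u n) ⊆ tkV u (tkF R u x k) ∧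
      tkr n ≤ (1/2 : ℝ) ^ (k + 1) ∧ x ∈ tkSat R (tkV u n)}.Nonempty := by
  obtain ⟨y, hy, hyx⟩ := hx
  obtain ⟨n, hyn, hcl, hr⟩ := tk_basis hu y _ (tkV_isOpen u (tkF R u x k)) hy (k + 1)
  exact ⟨n, hcl, hr, ⟨y, hyn, hyx⟩⟩

lemma tk_mem (hR : Equivalence R) (hu : DenseRange u) (x : X) :
    ∀ k, x ∈ tkSat R (tkV u (tkF R u x k)) := by
  intro k
  induction k with
  | zero => exact Nat.sInf_mem (tk_nonempty0 hR hu x)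
  | succ k ih => exact (Nat.sInf_mem (tk_nonempty_succ hR hu x k ih)).2.2

lemma tk_step (hR : Equivalence R) (hu : DenseRange u) (x : X) (k : ℕ) :
    closure (tkV u (tkF R u x (k+1))) ⊆ tkV u (tkF R u x k) ∧
      tkr (tkF R u x (k+1)) ≤ (1/2 : ℝ) ^ (k + 1) := by
  have h := Nat.sInf_mem (tk_nonempty_succ hR hu x k (tk_mem hR hu x k))
  exact ⟨h.1, h.2.1⟩

lemma tk_nest (hR : Equivalence R) (hu : DenseRange u) (x : X) :
    ∀ k l, k ≤ l → tkV u (tkF R u x l) ⊆ tkV u (tkF R u x k) := by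
  intro k l hkl
  induction l with
  | zero => simp_all
  | succ l ih =>
      rcases Nat.lt_or_ge k (l+1) with h | h
      · exact (subset_closure.trans (tk_step hR hu x l).1).trans (ih (Nat.lt_succ_iff.1 h))
      · have : k = l + 1 := le_antisymm hkl h
        subst this; exact subset_rfl

end Spec

/-- Characterization of `sInf` for nonempty sets of naturals. -/
lemma tk_sInf_eq_iff {D : Set ℕ} {n : ℕ} (hD : D.Nonempty) :
    sInf D = n ↔ n ∈ D ∧ ∀ j < n, j ∉ D := by
  constructor
  · rintro rfl
    exact ⟨Nat.sInf_mem hD, fun j hj => Nat.notMem_of_lt_sInf hj⟩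
  · rintro ⟨hn, hlt⟩
    refine le_antisymm (Nat.sInf_le hn) (le_of_not_gt fun h => ?_)
    exact hlt _ h (Nat.sInf_mem hD)

end TakesakiAux

section TakesakiMain

theorem tk_aux {X : Type*} [MetricSpace X] [SecondCountableTopology X] [CompleteSpace X]
    [MeasurableSpace X] [BorelSpace X]
    (R : X → X → Prop) (hR : Equivalence R)
    (hclosed : ∀ x : X, IsClosed {y : X | R x y})
    (hsat : ∀ U : Set X, IsOpen U → MeasurableSet {x : X | ∃ u ∈ U, R u x}) :
    ∃ S : Set X, MeasurableSet S ∧ ∀ x : X, ∃! y : X, y ∈ S ∧ R x y := by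
  rcases isEmpty_or_nonempty X with hX | hX
  · exact ⟨∅, MeasurableSet.empty, fun x => (hX.false x).elim⟩
  obtain ⟨u, hu⟩ : ∃ u : ℕ → X, DenseRange u :=
    ⟨TopologicalSpace.denseSeq X, TopologicalSpace.denseRange_denseSeq X⟩
  -- the selector
  set S : Set X := {x | ∀ k, x ∈ tkV u (tkF R u x k)} with hS
  have hsatmeas : ∀ n : ℕ, MeasurableSet (tkSat R (tkV u n)) := fun n =>
    hsat _ (tkV_isOpen u n)
  -- measurability of the fibers of tkF
  have hfiber : ∀ k n : ℕ, MeasurableSet {x : X | tkF R u x k = n} := by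
    intro k
    induction k with
    | zero =>
        intro n
        have : {x : X | tkF R u x 0 = n} =
            tkSat R (tkV u n) ∩ ⋂ j ∈ Finset.range n, (tkSat R (tkV u j))ᶜ := by
          ext x
          simp only [Set.mem_inter_iff, Set.mem_iInter, Finset.mem_range, Set.mem_compl_iff,
            Set.mem_setOf_eq]
          rw [show tkF R u x 0 = sInf {n | x ∈ tkSat R (tkV u n)} from rfl,
            tk_sInf_eq_iff (tk_nonempty0 hR hu x)]
          rfl
        rw [this]
        exact (hsatmeas n).inter
          (MeasurableSet.biInter (Set.to_countable _) fun j _ => (hsatmeas j).compl)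
    | succ k ih =>
        intro n
        -- the defining set for step k+1, parameterized by the previous value m
        have hQ : ∀ m j : ℕ, MeasurableSet {x : X | closure (tkV u j) ⊆ tkV u m ∧
            tkr j ≤ (1/2 : ℝ) ^ (k + 1) ∧ x ∈ tkSat R (tkV u j)} := by
          intro m j
          by_cases h1 : closure (tkV u j) ⊆ tkV u m ∧ tkr j ≤ (1/2 : ℝ) ^ (k + 1)
          · have : {x : X | closure (tkV u j) ⊆ tkV u m ∧
                tkr j ≤ (1/2 : ℝ) ^ (k + 1) ∧ x ∈ tkSat R (tkV u j)} =
                tkSat R (tkV u j) := by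
              ext x
              simp only [Set.mem_setOf_eq]
              exact ⟨fun h => h.2.2, fun h => ⟨h1.1, h1.2, h⟩⟩
            rw [this]; exact hsatmeas j
          · have : {x : X | closure (tkV u j) ⊆ tkV u m ∧
                tkr j ≤ (1/2 : ℝ) ^ (k + 1) ∧ x ∈ tkSat R (tkV u j)} = ∅ := by
              ext x
              simp only [Set.mem_setOf_eq, Set.mem_empty_iff_false, iff_false]
              rintro ⟨h1', h2', -⟩; exact h1 ⟨h1', h2'⟩
            rw [this]; exact MeasurableSet.empty
        have key : {x : X | tkF R u x (k+1) = n} =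
            ⋃ m, ({x : X | tkF R u x k = m} ∩
              ({x : X | closure (tkV u n) ⊆ tkV u m ∧
                tkr n ≤ (1/2 : ℝ) ^ (k + 1) ∧ x ∈ tkSat R (tkV u n)} ∩
               ⋂ j ∈ Finset.range n, {x : X | closure (tkV u j) ⊆ tkV u m ∧
                tkr j ≤ (1/2 : ℝ) ^ (k + 1) ∧ x ∈ tkSat R (tkV u j)}ᶜ)) := by
          ext x
          simp only [Set.mem_iUnion, Set.mem_inter_iff, Set.mem_iInter, Finset.mem_range,
            Set.mem_compl_iff, Set.mem_setOf_eq]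
          constructor
          · intro hx
            refine ⟨tkF R u x k, rfl, ?_⟩
            have hne := tk_nonempty_succ hR hu x k (tk_mem hR hu x k)
            have := (tk_sInf_eq_iff hne).1 (by exact hx)
            exact ⟨this.1, fun j hj => this.2 j hj⟩
          · rintro ⟨m, hm, hmem, hnot⟩
            have : tkF R u x (k+1) = sInf {j | closure (tkV u j) ⊆ tkV u (tkF R u x k) ∧
                tkr j ≤ (1/2 : ℝ) ^ (k + 1) ∧ x ∈ tkSat R (tkV u j)} := rfl
            rw [this, hm]
            refine le_antisymm (Nat.sInf_le hmem) (le_of_not_gt fun h => ?_)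
            have hne : ({j | closure (tkV u j) ⊆ tkV u m ∧
                tkr j ≤ (1/2 : ℝ) ^ (k + 1) ∧ x ∈ tkSat R (tkV u j)}).Nonempty := ⟨n, hmem⟩
            exact hnot _ h (Nat.sInf_mem hne)
        rw [key]
        refine MeasurableSet.iUnion fun m => (ih m).inter ((hQ m n).inter ?_)
        exact MeasurableSet.biInter (Set.to_countable _) fun j _ => (hQ m j).compl
  have hSmeas : MeasurableSet S := by
    have : S = ⋂ k, ⋃ n, ({x : X | tkF R u x k = n} ∩ tkV u n) := by
      ext x
      simp only [hS, Set.mem_setOf_eq, Set.mem_iInter, Set.mem_iUnion, Set.mem_inter_iff]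
      constructor
      · intro h k; exact ⟨tkF R u x k, rfl, h k⟩
      · rintro h k; obtain ⟨n, hn, hx⟩ := h k; rwa [hn]
    rw [this]
    exact MeasurableSet.iInter fun k => MeasurableSet.iUnion fun n =>
      (hfiber k n).inter (tkV_isOpen u n).measurableSet
  refine ⟨S, hSmeas, fun x => ?_⟩
  -- distance bound inside a ball from the family
  have hdist : ∀ n : ℕ, ∀ y z : X, y ∈ tkV u n → z ∈ tkV u n → dist y z ≤ 2 * tkr n := by
    intro n y z hy hz
    simp only [tkV, Metric.mem_ball] at hy hz
    calc dist y z ≤ dist y (u n.unpair.1) + dist (u n.unpair.1) z := dist_triangle _ _ _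
      _ ≤ tkr n + tkr n := add_le_add hy.le (by rw [dist_comm]; exact hz.le)
      _ = 2 * tkr n := by ring
  -- construct the selected point in the class of x
  have hpick : ∀ k, ∃ y, y ∈ tkV u (tkF R u x k) ∧ R x y := by
    intro k
    obtain ⟨y, hy, hyx⟩ := tk_mem hR hu x k
    exact ⟨y, hy, hR.symm hyx⟩
  choose y hyV hyR using hpick
  have hbound : ∀ k, ∀ l ≥ k, y l ∈ tkV u (tkF R u x k) := fun k l hl =>
    tk_nest hR hu x k l hl (hyV l)
  have hcauchy : CauchySeq y := by
    rw [Metric.cauchySeq_iff]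
    intro ε hε
    obtain ⟨k, hk⟩ := exists_pow_lt_of_lt_one hε (by norm_num : (1/2:ℝ) < 1)
    refine ⟨k + 1, fun a ha b hb => ?_⟩
    have h1 := hbound (k+1) a ha
    have h2 := hbound (k+1) b hb
    have := hdist _ _ _ h1 h2
    have hr := (tk_step hR hu x k).2
    calc dist (y a) (y b) ≤ 2 * tkr (tkF R u x (k+1)) := this
      _ ≤ 2 * (1/2:ℝ)^(k+1) := by linarith
      _ = (1/2:ℝ)^k := by ring
      _ < ε := hk
  obtain ⟨z, hz⟩ := cauchySeq_tendsto_of_complete hcauchy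
  have hzR : R x z := by
    have : z ∈ {w | R x w} :=
      (hclosed x).mem_of_tendsto hz (Filter.Eventually.of_forall fun k => hyR k)
    exact this
  have hzV : ∀ k, z ∈ tkV u (tkF R u x k) := by
    intro k
    have hcl : z ∈ closure (tkV u (tkF R u x (k+1))) := by
      refine isClosed_closure.mem_of_tendsto hz ?_
      filter_upwards [Filter.eventually_ge_atTop (k+1)] with l hl
      exact subset_closure (hbound (k+1) l hl)
    exact (tk_step hR hu x k).1 hcl
  have hzS : z ∈ S := by
    intro k
    rw [← tkF_congr hR u hzR k]
    exact hzV k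
  refine ⟨z, ⟨hzS, hzR⟩, ?_⟩
  -- uniqueness
  rintro w ⟨hwS, hwR⟩
  have hwV : ∀ k, w ∈ tkV u (tkF R u x k) := by
    intro k
    have := hwS k
    rwa [← tkF_congr hR u hwR k] at this
  by_contra hne
  have hd : 0 < dist w z := dist_pos.2 hne
  obtain ⟨k, hk⟩ := exists_pow_lt_of_lt_one hd (by norm_num : (1/2:ℝ) < 1)
  have h1 := hdist _ _ _ (hwV (k+1)) (hzV (k+1))
  have hr := (tk_step hR hu x k).2
  have : dist w z ≤ (1/2:ℝ)^k := by
    calc dist w z ≤ 2 * tkr (tkF R u x (k+1)) := h1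
      _ ≤ 2 * (1/2:ℝ)^(k+1) := by linarith
      _ = (1/2:ℝ)^k := by ring
  linarith

end TakesakiMain

/-- **Takesaki selection theorem (Borel version).** Let `R` be an equivalence relation
on a Polish space `X` such that every equivalence class is closed and the
`R`-saturation of every open set is Borel. Then there is a Borel subset of `X` meeting
every equivalence class in exactly one point. -/
theorem takesaki_selection_borel
    {X : Type*} [TopologicalSpace X] [PolishSpace X] [MeasurableSpace X] [BorelSpace X]
    (R : X → X → Prop) (hR : Equivalence R)
    (hclosed : ∀ x : X, IsClosed {y : X | R x y})
    (hsat : ∀ U : Set X, IsOpen U → MeasurableSet {x : X | ∃ u ∈ U, R u x}) :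
    ∃ S : Set X, MeasurableSet S ∧ ∀ x : X, ∃! y : X, y ∈ S ∧ R x y := by
  letI := upgradeIsCompletelyMetrizable X
  exact tk_aux R hR hclosed hsat
end

section
/- (Takesaki selection theorem, open version) Let R be an equivalence relation on a Polish space X such that every equivalence class is a closed subset of X, and such that the R-saturation of every open subset of X is open. Then there exists a subset Q of X which, with the subspace topology, is a Polish space and which meets every equivalence class in exactly one point. -/
open Metric Set Filter Topology TopologicalSpace

namespace TakesakiProof

/-! ### Gδ subsets of Polish spaces are Polish -/

/-- A countable intersection of open subsets of a Polish space is Polish. -/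
lemma polish_iInter_open {X : Type*} [TopologicalSpace X] [PolishSpace X]
    (U : ℕ → Set X) (hU : ∀ n, IsOpen (U n)) : PolishSpace (⋂ n, U n : Set X) := by
  haveI : ∀ n, PolishSpace (U n) := fun n => (hU n).polishSpace
  set C : Set (Π n, U n) := {f | ∀ m, ((f m : X)) = ((f 0 : X))} with hC
  have hCclosed : IsClosed C := by
    have : C = ⋂ m, {f : Π n, U n | ((f m : X)) = ((f 0 : X))} := by
      ext f; simp [hC, Set.mem_iInter]
    rw [this]
    exact isClosed_iInter fun m => isClosed_eq
      (continuous_subtype_val.comp (continuous_apply m))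
      (continuous_subtype_val.comp (continuous_apply 0))
  haveI : PolishSpace C := hCclosed.polishSpace
  have e : (⋂ n, U n : Set X) ≃ₜ C := by
    refine {
      toFun := fun x => ⟨fun n => ⟨(x : X), by
        have := x.2; rw [Set.mem_iInter] at this; exact this n⟩, fun m => rfl⟩
      invFun := fun f => ⟨((f.1 0 : X)), by
        rw [Set.mem_iInter]; intro n
        have := f.2 n; rw [← this]; exact (f.1 n).2⟩
      left_inv := fun x => rfl
      right_inv := fun f => by
        ext m
        · exact (f.2 m).symm
      continuous_toFun := ?_
      continuous_invFun := ?_ }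
    · exact Continuous.subtype_mk (continuous_pi fun n =>
        Continuous.subtype_mk continuous_subtype_val _) _
    · exact Continuous.subtype_mk
        (continuous_subtype_val.comp ((continuous_apply 0).comp continuous_subtype_val)) _
  exact e.isClosedEmbedding.polishSpace

/-- A Gδ subset of a Polish space is Polish. -/
lemma IsGδ.polishSpace' {X : Type*} [TopologicalSpace X] [PolishSpace X]
    {s : Set X} (hs : IsGδ s) : PolishSpace s := by
  obtain ⟨T, hTopen, hTcount, rfl⟩ := hs
  rcases T.eq_empty_or_nonempty with rfl | hTne
  · rw [Set.sInter_empty]; infer_instance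
  · obtain ⟨f, rfl⟩ := hTcount.exists_eq_range hTne
    rw [Set.sInter_range]
    exact polish_iInter_open f fun n => hTopen _ (Set.mem_range_self n)

/-! ### The Takesaki construction -/

variable {X : Type*} [MetricSpace X] (u : ℕ → X)

/-- The recursively defined shrinking open sets attached to a set `C` (intended: an
equivalence class). -/
noncomputable def V (C : Set X) : ℕ → Set X
  | 0 => Set.univ
  | n+1 => V C n ∩ Metric.ball
      (u (sInf {k | (C ∩ V C n ∩ Metric.ball (u k) ((1/2:ℝ)^n)).Nonempty})) ((1/2:ℝ)^n)

/-- The index chosen at step `n`. -/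
noncomputable def idx (C : Set X) (n : ℕ) : ℕ :=
  sInf {k | (C ∩ V u C n ∩ Metric.ball (u k) ((1/2:ℝ)^n)).Nonempty}

lemma V_succ (C : Set X) (n : ℕ) :
    V u C (n+1) = V u C n ∩ Metric.ball (u (idx u C n)) ((1/2:ℝ)^n) := rfl

lemma V_antitone (C : Set X) : Antitone (V u C) :=
  antitone_nat_of_succ_le fun n => by rw [V_succ]; exact Set.inter_subset_left

lemma pow_pos' (n : ℕ) : (0:ℝ) < (1/2:ℝ)^n := by positivity

lemma idx_set_nonempty (hu : DenseRange u) {C : Set X} (n : ℕ)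
    (h : (C ∩ V u C n).Nonempty) :
    {k | (C ∩ V u C n ∩ Metric.ball (u k) ((1/2:ℝ)^n)).Nonempty}.Nonempty := by
  obtain ⟨y, hy⟩ := h
  obtain ⟨k, hk⟩ := hu.exists_dist_lt y (pow_pos' n)
  exact ⟨k, ⟨y, hy, by simpa [Metric.mem_ball] using hk⟩⟩

lemma inter_V_nonempty (hu : DenseRange u) {C : Set X} (hC : C.Nonempty) :
    ∀ n, (C ∩ V u C n).Nonempty := by
  intro n
  induction n with
  | zero => simpa [V] using hC
  | succ n ih =>
    obtain ⟨z, hz1, hz2⟩ := Nat.sInf_mem (idx_set_nonempty u hu n ih)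
    exact ⟨z, hz1.1, by rw [V_succ]; exact ⟨hz1.2, hz2⟩⟩

lemma V_subset_ball (C : Set X) (n : ℕ) :
    V u C (n+1) ⊆ Metric.ball (u (idx u C n)) ((1/2:ℝ)^n) := by
  rw [V_succ]; exact Set.inter_subset_right

lemma cauchy_centers (hu : DenseRange u) {C : Set X} (hC : C.Nonempty) :
    CauchySeq (fun n => u (idx u C n)) := by
  rw [Metric.cauchySeq_iff']
  intro ε hε
  obtain ⟨N, hN⟩ := exists_pow_lt_of_lt_one (half_pos hε) (by norm_num : (1/2:ℝ) < 1)
  refine ⟨N, fun n hn => ?_⟩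
  obtain ⟨y, -, hy⟩ := inter_V_nonempty u hu hC (n+1)
  have h1 : y ∈ Metric.ball (u (idx u C n)) ((1/2:ℝ)^n) := V_subset_ball u C n hy
  have h2 : y ∈ Metric.ball (u (idx u C N)) ((1/2:ℝ)^N) :=
    V_subset_ball u C N (V_antitone u C (by omega : N + 1 ≤ n + 1) hy)
  calc dist (u (idx u C n)) (u (idx u C N))
      ≤ dist (u (idx u C n)) y + dist y (u (idx u C N)) := dist_triangle _ _ _
    _ < (1/2:ℝ)^n + (1/2:ℝ)^N := by
        rw [Metric.mem_ball] at h1 h2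
        rw [dist_comm (u (idx u C n)) y]
        exact add_lt_add h1 h2
    _ ≤ (1/2:ℝ)^N + (1/2:ℝ)^N := by
        have := pow_le_pow_of_le_one (by norm_num : (0:ℝ) ≤ 1/2)
          (by norm_num : (1/2:ℝ) ≤ 1) hn
        linarith
    _ < ε := by
        have : (1/2:ℝ)^N < ε/2 := hN
        linarith

/-- The selected point of a set `C`: the limit of the chosen centers. -/
noncomputable def sel [Nonempty X] (C : Set X) : X :=
  limUnder atTop (fun n => u (idx u C n))

variable [Nonempty X] [CompleteSpace X]

lemma tendsto_centers (hu : DenseRange u) {C : Set X} (hC : C.Nonempty) :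
    Tendsto (fun n => u (idx u C n)) atTop (𝓝 (sel u C)) :=
  (cauchy_centers u hu hC).tendsto_limUnder

lemma tendsto_pts (hu : DenseRange u) {C : Set X} (hC : C.Nonempty) :
    Tendsto (fun n => (inter_V_nonempty u hu hC (n+1)).some) atTop (𝓝 (sel u C)) := by
  refine (tendsto_centers u hu hC).congr_dist ?_
  have hb : ∀ n, dist (u (idx u C n)) ((inter_V_nonempty u hu hC (n+1)).some) ≤ (1/2:ℝ)^n := by
    intro n
    have h := (inter_V_nonempty u hu hC (n+1)).some_mem
    have := V_subset_ball u C n h.2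
    rw [Metric.mem_ball] at this
    rw [dist_comm]
    exact le_of_lt this
  refine squeeze_zero (fun n => dist_nonneg) hb ?_
  exact tendsto_pow_atTop_nhds_zero_of_lt_one (by norm_num) (by norm_num)

lemma sel_mem (hu : DenseRange u) {C : Set X} (hC : C.Nonempty) (hCc : IsClosed C) :
    sel u C ∈ C := by
  refine hCc.mem_of_tendsto (tendsto_pts u hu hC) (Eventually.of_forall fun n => ?_)
  exact (inter_V_nonempty u hu hC (n+1)).some_mem.1

lemma sel_mem_closure (hu : DenseRange u) {C : Set X} (hC : C.Nonempty) (n : ℕ) :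
    sel u C ∈ closure (V u C n) := by
  refine mem_closure_of_tendsto (tendsto_pts u hu hC) ?_
  filter_upwards [eventually_ge_atTop n] with m hm
  exact V_antitone u C (by omega : n ≤ m + 1) (inter_V_nonempty u hu hC (m+1)).some_mem.2

lemma closure_V_subset (C : Set X) (n : ℕ) :
    closure (V u C (n+1)) ⊆ Metric.closedBall (u (idx u C n)) ((1/2:ℝ)^n) :=
  closure_minimal ((V_subset_ball u C n).trans Metric.ball_subset_closedBall)
    Metric.isClosed_closedBall

lemma eq_of_mem_closures {C : Set X} {x y : X}
    (hx : ∀ n, x ∈ closure (V u C (n+1))) (hy : ∀ n, y ∈ closure (V u C (n+1))) :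
    x = y := by
  have hb : ∀ n : ℕ, dist x y ≤ 2 * (1/2:ℝ)^n := by
    intro n
    have h1 := closure_V_subset u C n (hx n)
    have h2 := closure_V_subset u C n (hy n)
    rw [Metric.mem_closedBall] at h1 h2
    calc dist x y ≤ dist x (u (idx u C n)) + dist (u (idx u C n)) y := dist_triangle _ _ _
      _ ≤ (1/2:ℝ)^n + (1/2:ℝ)^n := by rw [dist_comm (u (idx u C n)) y]; exact add_le_add h1 h2
      _ = 2 * (1/2:ℝ)^n := by ring
  have h0 : Tendsto (fun n : ℕ => 2 * (1/2:ℝ)^n) atTop (𝓝 0) := by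
    simpa using (tendsto_pow_atTop_nhds_zero_of_lt_one
      (by norm_num : (0:ℝ) ≤ 1/2) (by norm_num : (1/2:ℝ) < 1)).const_mul 2
  have : dist x y ≤ 0 := ge_of_tendsto h0 (Eventually.of_forall hb)
  exact dist_le_zero.mp this

/-! ### Deterministic versions -/

/-- Deterministic version of `V`, given a finite sequence of indices. -/
def Vdet (n : ℕ) (σ : Fin n → ℕ) : Set X :=
  ⋂ i : Fin n, Metric.ball (u (σ i)) ((1/2:ℝ)^(i:ℕ))

lemma Vdet_open (n : ℕ) (σ : Fin n → ℕ) : IsOpen (Vdet u n σ) :=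
  isOpen_iInter_of_finite fun _ => Metric.isOpen_ball

lemma iInter_fin_succ {n : ℕ} (f : Fin (n+1) → Set X) :
    ⋂ i, f i = (⋂ i : Fin n, f i.castSucc) ∩ f (Fin.last n) := by
  ext x
  simp only [Set.mem_iInter, Set.mem_inter_iff]
  exact Fin.forall_fin_succ'

lemma Vdet_succ (n : ℕ) (σ : Fin (n+1) → ℕ) :
    Vdet u (n+1) σ = Vdet u n (fun i => σ i.castSucc) ∩
      Metric.ball (u (σ (Fin.last n))) ((1/2:ℝ)^n) := by
  rw [Vdet, iInter_fin_succ]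
  simp [Vdet, Fin.coe_castSucc, Fin.val_last]

lemma V_eq_Vdet (C : Set X) : ∀ n, V u C n = Vdet u n (fun i => idx u C (i : ℕ))
  | 0 => by simp [V, Vdet]
  | (n+1) => by
    rw [V_succ, V_eq_Vdet C n, Vdet_succ]
    simp [Fin.coe_castSucc, Fin.val_last]

lemma V_eq_of_agree (C : Set X) (m : ℕ) (τ : Fin m → ℕ)
    (hag : ∀ j : Fin m, idx u C (j : ℕ) = τ j) : V u C m = Vdet u m τ := by
  rw [V_eq_Vdet]
  unfold Vdet
  exact Set.iInter_congr fun i => by simp only []; rw [hag i]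

/-! ### Saturation sets and the Gδ structure -/

variable (R : X → X → Prop)

/-- Saturation-type sets. -/
def Odet (n : ℕ) (σ : Fin n → ℕ) (k : ℕ) : Set X :=
  {x | ∃ y ∈ Vdet u n σ ∩ Metric.ball (u k) ((1/2:ℝ)^n), R y x}

lemma mem_Odet (hsymm : ∀ {a b}, R a b → R b a) {n : ℕ} {σ : Fin n → ℕ} {k : ℕ} {x : X} :
    x ∈ Odet u R n σ k ↔
      ({y | R x y} ∩ Vdet u n σ ∩ Metric.ball (u k) ((1/2:ℝ)^n)).Nonempty := by
  constructor
  · rintro ⟨y, ⟨hy1, hy2⟩, hyR⟩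
    exact ⟨y, ⟨hsymm hyR, hy1⟩, hy2⟩
  · rintro ⟨y, ⟨hy0, hy1⟩, hy2⟩
    exact ⟨y, ⟨hy1, hy2⟩, hsymm hy0⟩

/-- The set of points whose chosen index sequence starts with `σ`. -/
def Sdet (n : ℕ) (σ : Fin (n+1) → ℕ) : Set X :=
  {x | ∀ i : Fin (n+1), idx u {y | R x y} (i : ℕ) = σ i}

lemma Sdet_eq (hu : DenseRange u) (hrefl : ∀ x, R x x) (hsymm : ∀ {a b}, R a b → R b a)
    (n : ℕ) (σ : Fin (n+1) → ℕ) :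
    Sdet u R n σ =
      (⋂ i : Fin (n+1), Odet u R (i:ℕ) (fun j => σ (Fin.castLE i.isLt.le j)) (σ i)) ∩
      (⋂ i : Fin (n+1), ⋂ j : Fin (σ i),
        (Odet u R (i:ℕ) (fun j' => σ (Fin.castLE i.isLt.le j')) (j:ℕ))ᶜ) := by
  ext x
  set C := {y | R x y} with hCdef
  have hC : C.Nonempty := ⟨x, hrefl x⟩
  simp only [Set.mem_inter_iff, Set.mem_iInter, Sdet, Set.mem_setOf_eq]
  constructor
  · intro hx
    have hV : ∀ i : Fin (n+1),
        V u C (i:ℕ) = Vdet u (i:ℕ) (fun j => σ (Fin.castLE i.isLt.le j)) := by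
      intro i
      refine V_eq_of_agree u C _ _ fun j => ?_
      have h1 := hx (Fin.castLE i.isLt.le j)
      have h2 : ((Fin.castLE i.isLt.le j : Fin (n+1)) : ℕ) = (j : ℕ) := rfl
      rw [h2] at h1
      exact h1
    constructor
    · intro i
      rw [mem_Odet u R hsymm, ← hV i]
      have hmem : idx u C (i:ℕ) ∈
          {k | (C ∩ V u C (i:ℕ) ∩ Metric.ball (u k) ((1/2:ℝ)^(i:ℕ))).Nonempty} :=
        Nat.sInf_mem (idx_set_nonempty u hu (i:ℕ) (inter_V_nonempty u hu hC (i:ℕ)))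
      rw [hx i] at hmem
      exact hmem
    · intro i j
      rw [Set.mem_compl_iff, mem_Odet u R hsymm, ← hV i]
      intro hcon
      have hlt : (j:ℕ) < idx u C (i:ℕ) := by rw [hx i]; exact j.isLt
      exact Nat.notMem_of_lt_sInf hlt hcon
  · rintro ⟨h1, h2⟩
    have key : ∀ m : ℕ, ∀ hm : m < n+1, idx u C m = σ ⟨m, hm⟩ := by
      intro m
      induction m using Nat.strong_induction_on with
      | _ m IH =>
        intro hm
        have hV : V u C m = Vdet u m (fun j : Fin m => σ (Fin.castLE hm.le j)) := by
          refine V_eq_of_agree u C _ _ fun j => ?_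
          have hj : (j:ℕ) < n+1 := lt_trans j.isLt hm
          rw [IH (j:ℕ) j.isLt hj]
          exact congrArg σ (Fin.ext rfl)
        have hO1 : x ∈ Odet u R m (fun j : Fin m => σ (Fin.castLE hm.le j)) (σ ⟨m, hm⟩) :=
          h1 ⟨m, hm⟩
        have hO2 : ∀ j : Fin (σ ⟨m, hm⟩),
            x ∉ Odet u R m (fun j' : Fin m => σ (Fin.castLE hm.le j')) (j:ℕ) :=
          fun j => h2 ⟨m, hm⟩ j
        rw [mem_Odet u R hsymm, ← hV] at hO1
        have hle : idx u C m ≤ σ ⟨m, hm⟩ := Nat.sInf_le hO1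
        refine le_antisymm hle (le_of_not_gt fun hlt => ?_)
        have hmem : idx u C m ∈
            {k | (C ∩ V u C m ∩ Metric.ball (u k) ((1/2:ℝ)^m)).Nonempty} :=
          Nat.sInf_mem ⟨σ ⟨m, hm⟩, hO1⟩
        exact hO2 ⟨idx u C m, hlt⟩ (by rw [mem_Odet u R hsymm, ← hV]; exact hmem)
    intro i
    have := key (i:ℕ) i.isLt
    simpa using this

/-- The transversal, described explicitly. -/
lemma Q_eq :
    {x : X | ∀ n : ℕ, x ∈ closure (V u {y | R x y} (n+1))} =
      ⋂ n : ℕ, ⋂ σ : Fin (n+1) → ℕ, ((Sdet u R n σ)ᶜ ∪ closure (Vdet u (n+1) σ)) := by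
  ext x
  simp only [Set.mem_setOf_eq, Set.mem_iInter]
  constructor
  · intro h n σ
    rw [Set.mem_union, Set.mem_compl_iff]
    by_cases hs : x ∈ Sdet u R n σ
    · right
      have hV : V u {y | R x y} (n+1) = Vdet u (n+1) σ :=
        V_eq_of_agree u _ (n+1) σ (fun j => hs j)
      rw [← hV]
      exact h n
    · left; exact hs
  · intro h n
    have hs : x ∈ Sdet u R n (fun i => idx u {y | R x y} (i:ℕ)) := fun i => rfl
    have h' := h n (fun i => idx u {y | R x y} (i:ℕ))
    rw [Set.mem_union] at h'
    rcases h' with h' | h'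
    · exact absurd hs h'
    · rw [← V_eq_Vdet u {y | R x y} (n+1)] at h'
      exact h'

lemma isGδ_Q (hu : DenseRange u) (hrefl : ∀ x, R x x) (hsymm : ∀ {a b}, R a b → R b a)
    (hsat : ∀ U : Set X, IsOpen U → IsOpen {x | ∃ y ∈ U, R y x}) :
    IsGδ {x : X | ∀ n : ℕ, x ∈ closure (V u {y | R x y} (n+1))} := by
  rw [Q_eq u R]
  have hopen : ∀ (m : ℕ) (τ : Fin m → ℕ) (k : ℕ), IsOpen (Odet u R m τ k) := fun m τ k =>
    hsat _ ((Vdet_open u m τ).inter Metric.isOpen_ball)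
  refine IsGδ.iInter fun n => IsGδ.iInter fun σ => ?_
  rw [Sdet_eq u R hu hrefl hsymm n σ, Set.compl_inter]
  refine (IsGδ.union ?_ ?_).union isClosed_closure.isGδ
  · exact (isOpen_iInter_of_finite fun i => hopen _ _ _).isClosed_compl.isGδ
  · have hcl : IsClosed (⋂ i : Fin (n+1), ⋂ j : Fin (σ i),
        (Odet u R (i:ℕ) (fun j' => σ (Fin.castLE i.isLt.le j')) (j:ℕ))ᶜ) :=
      isClosed_iInter fun i => isClosed_iInter fun j => (hopen _ _ _).isClosed_compl
    exact hcl.isOpen_compl.isGδ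

end TakesakiProof

open TakesakiProof in
/-- **Takesaki selection theorem (open version).** Let `R` be an equivalence relation
on a Polish space `X` such that every equivalence class is closed and the
`R`-saturation of every open set is open. Then there is a subset `Q` of `X` which is a
Polish space with the subspace topology and which meets every equivalence class in
exactly one point. -/
theorem takesaki_selection_polish
    {X : Type*} [TopologicalSpace X] [PolishSpace X]
    (R : X → X → Prop) (hR : Equivalence R)
    (hclosed : ∀ x : X, IsClosed {y : X | R x y})
    (hsat : ∀ U : Set X, IsOpen U → IsOpen {x : X | ∃ u ∈ U, R u x}) :
    ∃ Q : Set X, PolishSpace Q ∧ ∀ x : X, ∃! y : X, y ∈ Q ∧ R x y := by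
  obtain hX | hX := isEmpty_or_nonempty X
  · exact ⟨∅, IsGδ.polishSpace' IsGδ.empty, fun x => isEmptyElim x⟩
  · letI := upgradeIsCompletelyMetrizable X
    have hu : DenseRange (denseSeq X) := denseRange_denseSeq X
    set u := denseSeq X with hudef
    have hsymm : ∀ {a b : X}, R a b → R b a := fun h => hR.symm h
    have hCne : ∀ x : X, ({y | R x y} : Set X).Nonempty := fun x => ⟨x, hR.refl x⟩
    have hCcongr : ∀ {x y : X}, R x y → {z | R x z} = {z | R y z} := by
      intro x y h; ext z
      exact ⟨fun hz => hR.trans (hR.symm h) hz, fun hz => hR.trans h hz⟩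
    refine ⟨{x : X | ∀ n : ℕ, x ∈ closure (V u {y | R x y} (n+1))}, ?_, ?_⟩
    · exact IsGδ.polishSpace' (isGδ_Q u R hu hR.refl hsymm hsat)
    · intro x
      set C := {y | R x y} with hCdef
      have hselC : sel u C ∈ C := sel_mem u hu (hCne x) (hclosed x)
      refine ⟨sel u C, ⟨?_, hselC⟩, ?_⟩
      · intro n
        have hCC : {y | R (sel u C) y} = C := (hCcongr hselC).symm
        rw [hCC]
        exact sel_mem_closure u hu (hCne x) (n+1)
      · rintro y ⟨hyQ, hyR⟩
        have hCy : {z | R y z} = C := (hCcongr hyR).symm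
        have hy' : ∀ n, y ∈ closure (V u C (n+1)) := fun n => by
          have := hyQ n; rwa [hCy] at this
        have hs' : ∀ n, sel u C ∈ closure (V u C (n+1)) := fun n =>
          sel_mem_closure u hu (hCne x) (n+1)
        exact eq_of_mem_closures u hy' hs'
end
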